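/- Let d ∈ ℕ, let 𝒟 be a probability mass function on 𝔽₂^d, let ε, δ ∈ (0,1), and let m ∈ ℕ with m ≥ 2(d + log(1/δ))/ε. If x₁, …, x_m are drawn independently from 𝒟 (i.e., according to the m-fold product measure 𝒟^{⊗m} on (𝔽₂^d)^m), then with probability at least 1 − δ the 𝔽₂-linear span S := span{x₁, …, x_m} satisfies Σ_{x ∈ S} 𝒟(x) ≥ 1 − ε. -/

import Mathlib

open scoped Kronecker Classical Matrix

namespace PauliSpec

/-- The field 𝔽₂. -/
abbrev F2 := ZMod 2

/-- The phase space 𝔽₂^{2n}, identified with pairs `(xX, xZ) ∈ 𝔽₂^n × 𝔽₂^n`. -/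
abbrev PhS (n : ℕ) := (Fin n → F2) × (Fin n → F2)

/-- Index type for `n`-qubit matrices: ℂ^{2^n} ≅ ⊗_{j=1}^n ℂ². -/
abbrev QIdx (n : ℕ) := Fin n → Fin 2

/-- The 2×2 Pauli X matrix. -/
def PauliX : Matrix (Fin 2) (Fin 2) ℂ := !![0, 1; 1, 0]

/-- The 2×2 Pauli Y matrix. -/
def PauliY : Matrix (Fin 2) (Fin 2) ℂ := !![0, -Complex.I; Complex.I, 0]

/-- The 2×2 Pauli Z matrix. -/
def PauliZ : Matrix (Fin 2) (Fin 2) ℂ := !![1, 0; 0, -1]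

/-- The Weyl operator `W_x := i^{xX·xZ} ⊗_j (X^{xX_j} Z^{xZ_j})`, written entrywise:
the `(u, v)` entry of the `n`-fold Kronecker product of matrices `M_j` is `∏_j (M_j)_{u_j v_j}`. -/
noncomputable def Weyl {n : ℕ} (x : PhS n) : Matrix (QIdx n) (QIdx n) ℂ :=
  fun u v =>
    (Complex.I ^ (∑ j, (x.1 j).val * (x.2 j).val)) *
      ∏ j, (PauliX ^ (x.1 j).val * PauliZ ^ (x.2 j).val) (u j) (v j)

/-- The symplectic product `[x,y] := ∑_j (xX_j·yZ_j + xZ_j·yX_j) ∈ 𝔽₂`. -/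
def sympl {n : ℕ} (x y : PhS n) : F2 :=
  ∑ j, (x.1 j * y.2 j + x.2 j * y.1 j)

lemma sympl_add_left {n : ℕ} (x y z : PhS n) :
    sympl (x + y) z = sympl x z + sympl y z := by
  simp only [sympl, Prod.fst_add, Prod.snd_add, Pi.add_apply, add_mul]
  rw [← Finset.sum_add_distrib]
  exact Finset.sum_congr rfl fun j _ => by ring

lemma sympl_smul_left {n : ℕ} (c : F2) (x z : PhS n) :
    sympl (c • x) z = c * sympl x z := by
  simp only [sympl, Prod.smul_fst, Prod.smul_snd, Pi.smul_apply, smul_eq_mul, Finset.mul_sum]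
  exact Finset.sum_congr rfl fun j _ => by ring

/-- The symplectic complement `S^⊥ := {x : [x,y] = 0 for all y ∈ S}`. -/
def symplComplement {n : ℕ} (S : Submodule F2 (PhS n)) : Submodule F2 (PhS n) where
  carrier := {x | ∀ y ∈ S, sympl x y = 0}
  add_mem' := by
    intro a b ha hb y hy
    rw [sympl_add_left, ha y hy, hb y hy, add_zero]
  zero_mem' := by
    intro y hy
    simp [sympl]
  smul_mem' := by
    intro c x hx y hy
    rw [sympl_smul_left, hx y hy, mul_zero]

/-- The Pauli support `supp(A) := {x : tr(W_x·A) ≠ 0}`. -/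
noncomputable def pauliSupport {n : ℕ} (A : Matrix (QIdx n) (QIdx n) ℂ) : Set (PhS n) :=
  {x | (Weyl x * A).trace ≠ 0}

/-- The Pauli projection `Π_S(A) := 2^{−n} ∑_{x∈S} tr(A·W_x)·W_x`. -/
noncomputable def pauliProj {n : ℕ} (S : Set (PhS n)) (A : Matrix (QIdx n) (QIdx n) ℂ) :
    Matrix (QIdx n) (QIdx n) ℂ :=
  (2 ^ n : ℂ)⁻¹ • ∑ᶠ x ∈ S, (A * Weyl x).trace • Weyl x

/-- The subspace `𝒲_{a,b} ⊆ 𝔽₂^{2n}`: `xX_j = 0` on the first `n−a` coordinates and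
`xZ_j = 0` on the first `n−a−b` coordinates. -/
def Wab (n a b : ℕ) : Submodule F2 (PhS n) where
  carrier := {x | (∀ j : Fin n, (j : ℕ) < n - a → x.1 j = 0) ∧
    ∀ j : Fin n, (j : ℕ) < n - a - b → x.2 j = 0}
  add_mem' := by
    rintro x y ⟨hx1, hx2⟩ ⟨hy1, hy2⟩
    refine ⟨fun j hj => ?_, fun j hj => ?_⟩
    · simp [Prod.fst_add, Pi.add_apply, hx1 j hj, hy1 j hj]
    · simp [Prod.snd_add, Pi.add_apply, hx2 j hj, hy2 j hj]
  zero_mem' := ⟨fun j _ => rfl, fun j _ => rfl⟩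
  smul_mem' := by
    rintro c x ⟨hx1, hx2⟩
    refine ⟨fun j hj => ?_, fun j hj => ?_⟩
    · simp [Prod.smul_fst, Pi.smul_apply, hx1 j hj]
    · simp [Prod.smul_snd, Pi.smul_apply, hx2 j hj]

/-- `A` is `(a,b)`-block-diagonal: under ℂ^{2^n} ≅ ℂ^{2^{n−a−b}} ⊗ ℂ^{2^b} ⊗ ℂ^{2^a},
`A = I ⊗ (∑_{y∈{0,1}^b} |y⟩⟨y| ⊗ A_y)`.  Entrywise: `A u v = 0` unless `u, v` agree on the
first `n−a` coordinates, and then the entry is `A_{u₂}(u₃, v₃)` where `u₂` is the middle `b`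
coordinates and `u₃, v₃` the last `a` coordinates. -/
def IsBlockDiag {n : ℕ} (a b : ℕ) (hab : a + b ≤ n)
    (A : Matrix (QIdx n) (QIdx n) ℂ) : Prop :=
  ∃ M : (Fin b → Fin 2) → Matrix (Fin a → Fin 2) (Fin a → Fin 2) ℂ,
    ∀ u v : QIdx n,
      A u v =
        if ∀ j : Fin n, (j : ℕ) < n - a → u j = v j then
          M (fun i => u ⟨n - a - b + i.1, by have := i.2; omega⟩)
            (fun i => u ⟨n - a + i.1, by have := i.2; omega⟩)
            (fun i => v ⟨n - a + i.1, by have := i.2; omega⟩)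
        else 0

/-- The ℓ² → ℓ² operator norm of a complex matrix. -/
noncomputable def l2OpNorm {ι κ : Type*} [Fintype ι] [Fintype κ] [DecidableEq κ]
    (A : Matrix ι κ ℂ) : ℝ :=
  ‖LinearMap.toContinuousLinearMap (Matrix.toEuclideanLin A)‖

/-- `C` is a Clifford unitary: it is unitary and conjugates every Weyl operator to a
signed Weyl operator. -/
def IsCliffordUnitary {n : ℕ} (C : Matrix (QIdx n) (QIdx n) ℂ) : Prop :=
  C ∈ Matrix.unitaryGroup (QIdx n) ℂ ∧
    ∀ x : PhS n, ∃ (y : PhS n) (s : ℂ), (s = 1 ∨ s = -1) ∧ C * Weyl x * Cᴴ = s • Weyl y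

/-- `C T C† := {y : ∃ x ∈ T, C·W_x·C† = ±W_y}`. -/
def conjSet {n : ℕ} (C : Matrix (QIdx n) (QIdx n) ℂ) (T : Set (PhS n)) : Set (PhS n) :=
  {y | ∃ x ∈ T, ∃ s : ℂ, (s = 1 ∨ s = -1) ∧ C * Weyl x * Cᴴ = s • Weyl y}

/-- The matrix acting as the 2×2 matrix `P` on qubit `i` and as the identity elsewhere:
`P_i := I^{⊗(i−1)} ⊗ P ⊗ I^{⊗(n−i)}`. -/
def onQubit {n : ℕ} (P : Matrix (Fin 2) (Fin 2) ℂ) (i : Fin n) :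
    Matrix (QIdx n) (QIdx n) ℂ :=
  fun u v => if ∀ j : Fin n, j ≠ i → u j = v j then P (u i) (v i) else 0

/-- The unitary on `2n` qubits exchanging the `i`-th qubit of the first group of `n`
qubits with the `i`-th qubit of the second group. -/
def swapQubit {n : ℕ} (i : Fin n) :
    Matrix (QIdx n × QIdx n) (QIdx n × QIdx n) ℂ :=
  fun p q =>
    if p.1 = Function.update q.1 i (q.2 i) ∧ p.2 = Function.update q.2 i (q.1 i) then 1 else 0

section Aux18
variable {d : ℕ}

noncomputable def mass (D : (Fin d → F2) → ℝ) (S : Submodule F2 (Fin d → F2)) : ℝ :=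
  ∑ x ∈ (S : Set (Fin d → F2)).toFinset, D x

lemma mass_nonneg (D : (Fin d → F2) → ℝ) (hD : ∀ x, 0 ≤ D x) (S : Submodule F2 (Fin d → F2)) :
    0 ≤ mass D S := Finset.sum_nonneg fun x _ => hD x

lemma mass_mono (D : (Fin d → F2) → ℝ) (hD : ∀ x, 0 ≤ D x) {S T : Submodule F2 (Fin d → F2)}
    (h : S ≤ T) : mass D S ≤ mass D T :=
  Finset.sum_le_sum_of_subset_of_nonneg (Set.toFinset_subset_toFinset.mpr h)
    (fun x _ _ => hD x)

lemma mass_top (D : (Fin d → F2) → ℝ) (hD1 : ∑ x, D x = 1) :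
    mass D ⊤ = 1 := by
  rw [mass]; simpa using hD1

lemma finsum_eq_mass (D : (Fin d → F2) → ℝ) (S : Submodule F2 (Fin d → F2)) :
    ∑ᶠ x ∈ (S : Set (Fin d → F2)), D x = mass D S := by
  rw [← Set.coe_toFinset (S : Set (Fin d → F2)), finsum_mem_coe_finset, mass]

noncomputable def Bin (ε : ℝ) : ℕ → ℕ → ℝ
  | _, 0 => 0
  | 0, _+1 => 1
  | k+1, r+1 => (1-ε) * Bin ε k (r+1) + ε * Bin ε k r

lemma Bin_nonneg {ε : ℝ} (h0 : 0 ≤ ε) (h1 : ε ≤ 1) : ∀ k r, 0 ≤ Bin ε k r := by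
  intro k
  induction k with
  | zero => rintro (_|r) <;> simp [Bin]
  | succ k ih =>
    rintro (_|r)
    · simp [Bin]
    · rw [Bin]
      have := ih (r+1); have := ih r
      nlinarith

lemma Bin_mono {ε : ℝ} (h0 : 0 ≤ ε) (h1 : ε ≤ 1) : ∀ k r, Bin ε k r ≤ Bin ε k (r+1) := by
  intro k
  induction k with
  | zero => rintro (_|r) <;> simp [Bin]
  | succ k ih =>
    rintro (_|r)
    · simpa [Bin] using Bin_nonneg h0 h1 (k+1) 1
    · rw [Bin, Bin]
      have := ih (r+1); have := ih r
      nlinarith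

lemma Bin_mono' {ε : ℝ} (h0 : 0 ≤ ε) (h1 : ε ≤ 1) (k : ℕ) {a b : ℕ} (hab : a ≤ b) :
    Bin ε k a ≤ Bin ε k b := by
  induction b with
  | zero => simp_all
  | succ b ih =>
    rcases Nat.lt_or_ge a (b+1) with h | h
    · exact le_trans (ih (by omega)) (Bin_mono h0 h1 k b)
    · have : a = b + 1 := by omega
      simp [this]

lemma Bin_le {ε : ℝ} (h0 : 0 ≤ ε) (h1 : ε ≤ 1) :
    ∀ k r, Bin ε k r ≤ 2 ^ r * (1 - ε/2) ^ k := by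
  intro k
  induction k with
  | zero =>
    rintro (_|r)
    · simp [Bin]
    · rw [Bin]
      simp only [pow_zero, mul_one]
      have : (1:ℝ) ≤ 2 ^ (r+1) := one_le_pow₀ (by norm_num)
      linarith
  | succ k ih =>
    rintro (_|r)
    · rw [Bin]
      have hhalf : (0:ℝ) ≤ 1 - ε/2 := by linarith
      positivity
    · rw [Bin]
      have h1' := ih (r+1); have h2' := ih r
      have hhalf : (0:ℝ) ≤ 1 - ε/2 := by linarith
      have hpos : (0:ℝ) ≤ (1 - ε/2)^k := pow_nonneg hhalf k
      have : (2:ℝ)^(r+1) * (1-ε/2)^(k+1) = (1-ε) * (2^(r+1) * (1-ε/2)^k) + ε * (2^r * (1-ε/2)^k) := by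
        ring
      rw [this]
      have : (0:ℝ) ≤ 1 - ε := by linarith
      nlinarith

noncomputable def Q (D : (Fin d → F2) → ℝ) (ε : ℝ) (k : ℕ) (S : Submodule F2 (Fin d → F2)) : ℝ :=
  ∑ ω : Fin k → (Fin d → F2), (∏ i, D (ω i)) *
    (if mass D (S ⊔ Submodule.span F2 (Set.range ω)) < 1 - ε then 1 else 0)

lemma sum_cons_split {V : Type*} [Fintype V] (n : ℕ) (f : (Fin (n+1) → V) → ℝ) :
    ∑ ω : Fin (n+1) → V, f ω = ∑ x : V, ∑ t : Fin n → V, f (Fin.cons x t) := by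
  rw [(Fintype.sum_equiv (Fin.consEquiv (fun _ => V)) _ (fun ω => f ω) (fun p => rfl) :
      ∑ p : V × (Fin n → V), f (Fin.cons p.1 p.2) = _).symm, Fintype.sum_prod_type]

lemma Q_succ (D : (Fin d → F2) → ℝ) (ε : ℝ) (k : ℕ) (S : Submodule F2 (Fin d → F2)) :
    Q D ε (k+1) S = ∑ x, D x * Q D ε k (S ⊔ Submodule.span F2 {x}) := by
  rw [Q, sum_cons_split]
  refine Finset.sum_congr rfl fun x _ => ?_
  rw [Q, Finset.mul_sum]
  refine Finset.sum_congr rfl fun t _ => ?_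
  rw [Fin.prod_univ_succ]
  simp only [Fin.cons_zero, Fin.cons_succ]
  rw [Fin.range_cons, Submodule.span_insert, ← sup_assoc, mul_assoc]

lemma Q_eq_zero (D : (Fin d → F2) → ℝ) (hD : ∀ x, 0 ≤ D x) {ε : ℝ} (k : ℕ)
    {S : Submodule F2 (Fin d → F2)} (h : 1 - ε ≤ mass D S) : Q D ε k S = 0 := by
  rw [Q]
  refine Finset.sum_eq_zero fun ω _ => ?_
  rw [if_neg, mul_zero]
  push_neg
  exact le_trans h (mass_mono D hD le_sup_left)

lemma Q_le (D : (Fin d → F2) → ℝ) (hD0 : ∀ x, 0 ≤ D x) (hD1 : ∑ x, D x = 1)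
    {ε : ℝ} (hε : 0 < ε) (hε1 : ε < 1) :
    ∀ k S, Q D ε k S ≤ Bin ε k (d - Module.finrank F2 S) := by
  have h0 : (0:ℝ) ≤ ε := le_of_lt hε
  have h1 : ε ≤ 1 := le_of_lt hε1
  intro k
  induction k with
  | zero =>
    intro S
    rcases lt_or_ge (mass D S) (1 - ε) with h | h
    · have hS : S ≠ ⊤ := by
        intro ht
        rw [ht, mass_top D hD1] at h
        linarith
      have hrank : Module.finrank F2 S < d := by
        have := Submodule.finrank_lt (K := F2) (V := Fin d → F2) hS
        simpa [Module.finrank_fin_fun] using this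
      obtain ⟨r, hr⟩ : ∃ r, d - Module.finrank F2 S = r + 1 := ⟨d - Module.finrank F2 S - 1, by omega⟩
      rw [hr]
      have hQ : Q D ε 0 S ≤ 1 := by
        rw [Q, Fintype.sum_unique]
        split_ifs <;> simp
      calc Q D ε 0 S ≤ 1 := hQ
        _ = Bin ε 0 (r+1) := by rw [Bin]
    · rw [Q_eq_zero D hD0 0 h]
      exact Bin_nonneg h0 h1 _ _
  | succ k ih =>
    intro S
    rcases lt_or_ge (mass D S) (1 - ε) with h | h
    · have hS : S ≠ ⊤ := by
        intro ht
        rw [ht, mass_top D hD1] at h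
        linarith
      have hrank : Module.finrank F2 S < d := by
        have := Submodule.finrank_lt (K := F2) (V := Fin d → F2) hS
        simpa [Module.finrank_fin_fun] using this
      set r' := d - Module.finrank F2 S - 1 with hr'
      have hr : d - Module.finrank F2 S = r' + 1 := by omega
      rw [Q_succ, hr]
      have hbound : ∀ x : Fin d → F2, D x * Q D ε k (S ⊔ Submodule.span F2 {x})
          ≤ D x * (if x ∈ S then Bin ε k (r'+1) else Bin ε k r') := by
        intro x
        apply mul_le_mul_of_nonneg_left _ (hD0 x)
        split_ifs with hx
        · have hsup : S ⊔ Submodule.span F2 {x} = S := by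
            rw [sup_eq_left]
            exact (Submodule.span_singleton_le_iff_mem x S).mpr hx
          rw [hsup, ← hr]
          exact ih S
        · have hlt : S < S ⊔ Submodule.span F2 {x} := by
            refine lt_of_le_of_ne le_sup_left fun he => hx ?_
            have : x ∈ S ⊔ Submodule.span F2 {x} :=
              Submodule.mem_sup_right (Submodule.mem_span_singleton_self x)
            rwa [← he] at this
          have hfr : Module.finrank F2 S < Module.finrank F2 ↥(S ⊔ Submodule.span F2 {x}) :=
            Submodule.finrank_lt_finrank_of_lt hlt
          calc Q D ε k (S ⊔ Submodule.span F2 ({x} : Set (Fin d → F2)))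
              ≤ Bin ε k (d - Module.finrank F2 ↥(S ⊔ Submodule.span F2 {x})) := ih _
            _ ≤ Bin ε k r' := Bin_mono' h0 h1 k (by omega)
      calc ∑ x, D x * Q D ε k (S ⊔ Submodule.span F2 {x})
          ≤ ∑ x, D x * (if x ∈ S then Bin ε k (r'+1) else Bin ε k r') :=
            Finset.sum_le_sum fun x _ => hbound x
        _ ≤ Bin ε (k+1) (r'+1) := by
            rw [← Finset.sum_filter_add_sum_filter_not Finset.univ (fun x => x ∈ S)]
            have e1 : ∑ x ∈ Finset.univ.filter (fun x => x ∈ S),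
                D x * (if x ∈ S then Bin ε k (r'+1) else Bin ε k r')
                = mass D S * Bin ε k (r'+1) := by
              rw [mass, Finset.sum_mul]
              refine Finset.sum_congr ?_ fun x hx => ?_
              · ext x; simp [Set.mem_toFinset]
              · rw [if_pos]
                simpa [Set.mem_toFinset] using hx
            have e2 : ∑ x ∈ Finset.univ.filter (fun x => ¬ x ∈ S),
                D x * (if x ∈ S then Bin ε k (r'+1) else Bin ε k r')
                = (1 - mass D S) * Bin ε k r' := by
              have hsplit : mass D S + ∑ x ∈ Finset.univ.filter (fun x => ¬ x ∈ S), D x = 1 := by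
                rw [← hD1, ← Finset.sum_filter_add_sum_filter_not Finset.univ (fun x => x ∈ S)]
                congr 1
                rw [mass]
                refine Finset.sum_congr ?_ fun x _ => rfl
                ext x; simp [Set.mem_toFinset]
              rw [Finset.sum_congr rfl (fun x hx => by
                rw [if_neg]; simpa using (Finset.mem_filter.mp hx).2), ← Finset.sum_mul]
              rw [show ∑ x ∈ Finset.univ.filter (fun x => ¬ x ∈ S), D x = 1 - mass D S by linarith]
            rw [e1, e2, Bin]
            have hp0 : 0 ≤ mass D S := mass_nonneg D hD0 S
            have hmono := Bin_mono h0 h1 k r'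
            have hBn := Bin_nonneg h0 h1 k r'
            nlinarith
    · rw [Q_eq_zero D hD0 (k+1) h]
      exact Bin_nonneg h0 h1 _ _

lemma sum_prod_eq_one (D : (Fin d → F2) → ℝ) (hD1 : ∑ x, D x = 1) :
    ∀ k, ∑ ω : Fin k → (Fin d → F2), ∏ i, D (ω i) = 1 := by
  intro k
  induction k with
  | zero => simp
  | succ k ih =>
    rw [sum_cons_split]
    have : ∀ x : Fin d → F2, ∑ t : Fin k → (Fin d → F2), ∏ i, D ((Fin.cons x t : Fin (k+1) → Fin d → F2) i)
        = D x := by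
      intro x
      have : ∀ t : Fin k → (Fin d → F2), ∏ i, D ((Fin.cons x t : Fin (k+1) → Fin d → F2) i) = D x * ∏ i, D (t i) := by
        intro t
        rw [Fin.prod_univ_succ]
        simp [Fin.cons_zero, Fin.cons_succ]
      rw [Finset.sum_congr rfl fun t _ => this t, ← Finset.mul_sum, ih, mul_one]
    rw [Finset.sum_congr rfl fun x _ => this x, hD1]


end Aux18

theorem stmt18 (d : ℕ) (D : (Fin d → F2) → ℝ) (hD0 : ∀ x, 0 ≤ D x) (hD1 : ∑ x, D x = 1)
    (ε δ : ℝ) (hε : ε ∈ Set.Ioo (0 : ℝ) 1) (hδ : δ ∈ Set.Ioo (0 : ℝ) 1)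
    (m : ℕ) (hm : 2 * ((d : ℝ) + Real.log (1 / δ)) / ε ≤ (m : ℝ)) :
    1 - δ ≤ ∑ ω : Fin m → (Fin d → F2),
        (∏ i, D (ω i)) *
          (if 1 - ε ≤ ∑ᶠ x ∈ (Submodule.span F2 (Set.range ω) : Set (Fin d → F2)), D x
            then 1 else 0) := by
  obtain ⟨hε0, hε1⟩ := hε
  obtain ⟨hδ0, hδ1⟩ := hδ
  have expand : ∑ ω : Fin m → (Fin d → F2), (∏ i, D (ω i)) *
      (if 1 - ε ≤ ∑ᶠ x ∈ (Submodule.span F2 (Set.range ω) : Set (Fin d → F2)), D x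
        then 1 else 0) = 1 - Q D ε m ⊥ := by
    have term : ∀ ω : Fin m → (Fin d → F2), (∏ i, D (ω i)) *
        (if 1 - ε ≤ ∑ᶠ x ∈ (Submodule.span F2 (Set.range ω) : Set (Fin d → F2)), D x
          then 1 else 0) = (∏ i, D (ω i)) - (∏ i, D (ω i)) *
        (if mass D (⊥ ⊔ Submodule.span F2 (Set.range ω)) < 1 - ε then 1 else 0) := by
      intro ω
      rw [finsum_eq_mass, bot_sup_eq]
      rcases lt_or_ge (mass D (Submodule.span F2 (Set.range ω))) (1 - ε) with h | h
      · rw [if_neg (not_le.mpr h), if_pos h]; ring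
      · rw [if_pos h, if_neg (not_lt.mpr h)]; ring
    rw [Finset.sum_congr rfl fun ω _ => term ω, Finset.sum_sub_distrib,
      sum_prod_eq_one D hD1 m, Q]
  rw [expand]
  have hεm : 2 * ((d : ℝ) + Real.log (1 / δ)) ≤ ε * m := by
    have := (div_le_iff₀ hε0).mp hm
    linarith
  rw [one_div, Real.log_inv] at hεm
  have h2 : (2:ℝ) ^ d ≤ Real.exp d := by
    calc (2:ℝ) ^ d ≤ (Real.exp 1) ^ d :=
          pow_le_pow_left₀ (by norm_num) (by have := Real.add_one_le_exp 1; linarith) d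
      _ = Real.exp d := by rw [← Real.exp_nat_mul]; norm_num
  have h3 : (1 - ε/2) ^ m ≤ Real.exp (-(ε/2) * m) := by
    calc (1 - ε/2) ^ m ≤ (Real.exp (-(ε/2))) ^ m :=
          pow_le_pow_left₀ (by linarith) (by have := Real.add_one_le_exp (-(ε/2)); linarith) m
      _ = Real.exp (-(ε/2) * m) := by rw [← Real.exp_nat_mul]; ring_nf
  have hQ : Q D ε m ⊥ ≤ δ := by
    calc Q D ε m ⊥ ≤ Bin ε m (d - Module.finrank F2 (⊥ : Submodule F2 (Fin d → F2))) :=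
          Q_le D hD0 hD1 hε0 hε1 m ⊥
      _ = Bin ε m d := by rw [finrank_bot, Nat.sub_zero]
      _ ≤ 2 ^ d * (1 - ε/2) ^ m := Bin_le hε0.le hε1.le m d
      _ ≤ Real.exp d * Real.exp (-(ε/2) * m) := by
          have e1 : (0:ℝ) ≤ (1 - ε/2) ^ m := pow_nonneg (by linarith) m
          have e2 : (0:ℝ) ≤ (2:ℝ) ^ d := by positivity
          nlinarith [Real.exp_pos (d:ℝ), Real.exp_pos (-(ε/2) * m)]
      _ = Real.exp ((d:ℝ) + -(ε/2) * m) := (Real.exp_add _ _).symm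
      _ ≤ Real.exp (Real.log δ) := by
          apply Real.exp_le_exp.mpr
          linarith
      _ = δ := Real.exp_log hδ0
  linarith

end PauliSpec
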